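/- Let T be a metric space in which every pair of points is joined by a unique geodesic, and such that T is an ℝ-tree (any loop formed by concatenating geodesics is degenerate: for geodesics γ₁, γ₂, γ₃ forming a triangle with vertices a₁₂, a₁₃, a₂₃, one of the sides is contained in the union of the other two). Then any three closed balls B₁, B₂, B₃ in T that are geodesically convex and pairwise intersecting have a common point. -/

import Mathlib

open Set Metric

/-- Key connectedness lemma: a geodesic segment covered by two closed sets,
with one endpoint in each, meets both. -/
lemma geodesic_meets_both {T : Type*} [MetricSpace T] (γ : ℝ → T) (d : ℝ)
    (hd : 0 ≤ d)
    (hlip : ∀ s ∈ Icc (0:ℝ) d, ∀ t ∈ Icc (0:ℝ) d, dist (γ s) (γ t) = |s - t|)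
    (Q R : Set T) (hQ : IsClosed Q) (hR : IsClosed R)
    (hcov : γ '' Icc (0:ℝ) d ⊆ Q ∪ R) (ha : γ 0 ∈ Q) (hb : γ d ∈ R) :
    ∃ p ∈ γ '' Icc (0:ℝ) d, p ∈ Q ∩ R := by
  have hcont : ContinuousOn γ (Icc (0:ℝ) d) := by
    apply LipschitzOnWith.continuousOn (K := 1)
    intro s hs t ht
    rw [edist_dist, hlip s hs t ht]
    simp [edist_dist, Real.dist_eq]
  have hpre : IsPreconnected (Icc (0:ℝ) d) := isPreconnected_Icc
  rw [isPreconnected_closed_iff] at hpre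
  have hQc : IsClosed (Icc (0:ℝ) d ∩ γ ⁻¹' Q) :=
    hcont.preimage_isClosed_of_isClosed isClosed_Icc hQ
  have hRc : IsClosed (Icc (0:ℝ) d ∩ γ ⁻¹' R) :=
    hcont.preimage_isClosed_of_isClosed isClosed_Icc hR
  obtain ⟨t, ht, htQR⟩ := hpre _ _ hQc hRc
    (by
      intro t ht
      rcases hcov ⟨t, ht, rfl⟩ with h | h
      · exact Or.inl ⟨ht, h⟩
      · exact Or.inr ⟨ht, h⟩)
    ⟨0, ⟨left_mem_Icc.2 hd, left_mem_Icc.2 hd, ha⟩⟩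
    ⟨d, ⟨right_mem_Icc.2 hd, right_mem_Icc.2 hd, hb⟩⟩
  exact ⟨γ t, ⟨t, ht, rfl⟩, htQR.1.2, htQR.2.2⟩

/-- Helly property for three geodesically convex, pairwise intersecting closed balls
in an ℝ-tree: they have a common point.  Geodesics are encoded by a map `geo`
assigning to each pair of points its (unique) geodesic segment, parametrized
isometrically; the tree condition says that in any geodesic triangle one side is
contained in the union of the other two. -/
theorem helly_three_balls_in_tree
    {T : Type*} [MetricSpace T] (geo : T → T → Set T)
    (hgeo : ∀ a b : T, ∃ γ : ℝ → T, γ 0 = a ∧ γ (dist a b) = b ∧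
      (∀ s ∈ Icc (0:ℝ) (dist a b), ∀ t ∈ Icc (0:ℝ) (dist a b),
        dist (γ s) (γ t) = |s - t|) ∧
      geo a b = γ '' Icc (0:ℝ) (dist a b))
    (hsymm : ∀ a b, geo a b = geo b a)
    (htree : ∀ a b c : T,
      geo a b ⊆ geo a c ∪ geo c b ∨ geo a c ⊆ geo a b ∪ geo b c ∨
        geo b c ⊆ geo b a ∪ geo a c)
    (c : Fin 3 → T) (r : Fin 3 → ℝ)
    (hconv : ∀ i, ∀ x ∈ closedBall (c i) (r i), ∀ y ∈ closedBall (c i) (r i),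
      geo x y ⊆ closedBall (c i) (r i))
    (hpair : ∀ i j, (closedBall (c i) (r i) ∩ closedBall (c j) (r j)).Nonempty) :
    (closedBall (c 0) (r 0) ∩ closedBall (c 1) (r 1) ∩ closedBall (c 2) (r 2)).Nonempty := by
  set B : Fin 3 → Set T := fun i => closedBall (c i) (r i) with hB
  obtain ⟨x, hx0, hx1⟩ := hpair 0 1
  obtain ⟨y, hy0, hy2⟩ := hpair 0 2
  obtain ⟨z, hz1, hz2⟩ := hpair 1 2
  -- general extraction helper
  have main : ∀ (a b : T) (i j k : Fin 3), a ∈ B i → a ∈ B j → b ∈ B i → b ∈ B k →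
      geo a b ⊆ B j ∪ B k →
      (B i ∩ B j ∩ B k).Nonempty := by
    intro a b i j k hai haj hbi hbk hcov
    obtain ⟨γ, h0, hd, hlip, hset⟩ := hgeo a b
    have hmemab : ∀ p ∈ geo a b, True := fun _ _ => trivial
    obtain ⟨p, hpmem, hpQ, hpR⟩ := geodesic_meets_both γ (dist a b) dist_nonneg hlip
      (B j) (B k) isClosed_closedBall isClosed_closedBall
      (by rw [← hset]; exact hcov) (by rw [h0]; exact haj) (by rw [hd]; exact hbk)
    have hpi : p ∈ B i := hconv i a hai b hbi (hset ▸ hpmem)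
    exact ⟨p, ⟨hpi, hpQ⟩, hpR⟩
  rcases htree x y z with h | h | h
  · -- geo x y ⊆ geo x z ∪ geo z y, geo x y ⊆ B0, geo x z ⊆ B1, geo z y ⊆ B2
    have hcov : geo x y ⊆ B 1 ∪ B 2 := fun p hp => by
      rcases h hp with hp | hp
      · exact Or.inl (hconv 1 x hx1 z hz1 hp)
      · exact Or.inr (hconv 2 z hz2 y hy2 hp)
    obtain ⟨p, ⟨h0, h1⟩, h2⟩ := main x y 0 1 2 hx0 hx1 hy0 hy2 hcov
    exact ⟨p, ⟨h0, h1⟩, h2⟩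
  · -- geo x z ⊆ geo x y ∪ geo y z : geo x z ⊆ B1, geo x y ⊆ B0, geo y z ⊆ B2
    have hcov : geo x z ⊆ B 0 ∪ B 2 := fun p hp => by
      rcases h hp with hp | hp
      · exact Or.inl (hconv 0 x hx0 y hy0 hp)
      · exact Or.inr (hconv 2 y hy2 z hz2 hp)
    obtain ⟨p, ⟨h1, h0⟩, h2⟩ := main x z 1 0 2 hx1 hx0 hz1 hz2 hcov
    exact ⟨p, ⟨h0, h1⟩, h2⟩
  · -- geo y z ⊆ geo y x ∪ geo x z : geo y z ⊆ B2, geo y x ⊆ B0, geo x z ⊆ B1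
    have hcov : geo y z ⊆ B 0 ∪ B 1 := fun p hp => by
      rcases h hp with hp | hp
      · rw [hsymm y x] at hp
        exact Or.inl (hconv 0 x hx0 y hy0 hp)
      · exact Or.inr (hconv 1 x hx1 z hz1 hp)
    obtain ⟨p, ⟨h2, h0⟩, h1⟩ := main y z 2 0 1 hy2 hy0 hz2 hz1 hcov
    exact ⟨p, ⟨h0, h1⟩, h2⟩
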